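/- (σ-division with remainder) Let q ∈ ℂ* not be a root of unity and let w, r be nonzero elements of the quantum torus A_q with deg_σ(w) ≤ deg_σ(r), where deg_σ denotes the difference between the highest and lowest σ-exponents appearing with nonzero coefficient when an element is written as a Laurent polynomial in σ over A = ℂ[z,z⁻¹]. Then there exist a nonzero g = g(z) ∈ A and h ∈ A_q such that either g·r − h·w = 0 or deg_σ(g·r − h·w) < deg_σ(w). -/

import Mathlib

open LaurentPolynomial

noncomputable section

/-- The `σ`-degree of an element of the quantum torus `A_q`, presented via its canonical
`ℂ`-basis `z^m σ^n` indexed by `ℤ × ℤ`: the difference between the largest and smallest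
`σ`-exponents occurring in `x` (defined to be `0` on `x = 0`). -/
def sigmaDeg {D : Type*} [Ring D] [Algebra ℂ D] (B : Module.Basis (ℤ × ℤ) ℂ D) (x : D) : ℤ :=
  (WithBot.unbotD 0 ((B.repr x).support.image Prod.snd).max) -
    (WithTop.untopD 0 ((B.repr x).support.image Prod.snd).min)

/-- The canonical embedding of `A = ℂ[z,z⁻¹]` into the quantum torus, `g(z) ↦ g(Z)`. -/
def embA {D : Type*} [Ring D] [Algebra ℂ D] (zd : Dˣ) (g : LaurentPolynomial ℂ) : D :=
  Finsupp.sum g.coeff fun n a => a • ((zd ^ n : Dˣ) : D)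

namespace Stmt5Aux

variable {D : Type*} [Ring D] [Algebra ℂ D]

/-- `embA` as an algebra homomorphism. -/
def embHom (zd : Dˣ) : LaurentPolynomial ℂ →ₐ[ℂ] D :=
  AddMonoidAlgebra.lift ℂ D ℤ ((Units.coeHom D).comp (zpowersHom Dˣ zd))

lemma embA_eq (zd : Dˣ) (g : LaurentPolynomial ℂ) : embA zd g = embHom zd g := by
  rw [embHom, AddMonoidAlgebra.lift_apply, embA]
  simp

lemma embHom_single (zd : Dˣ) (m : ℤ) (a : ℂ) :
    embHom zd (AddMonoidAlgebra.single m a) = a • ((zd ^ m : Dˣ) : D) := by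
  rw [embHom]
  rw [AddMonoidAlgebra.lift_single]
  simp

/-- The set of `σ`-exponents of `x`. -/
def SProj (B : Module.Basis (ℤ × ℤ) ℂ D) (x : D) : Finset ℤ := (B.repr x).support.image Prod.snd

lemma sigmaDeg_def (B : Module.Basis (ℤ × ℤ) ℂ D) (x : D) :
    sigmaDeg B x = (WithBot.unbotD 0 (SProj B x).max) - (WithTop.untopD 0 (SProj B x).min) := rfl

lemma SProj_nonempty (B : Module.Basis (ℤ × ℤ) ℂ D) {x : D} (hx : x ≠ 0) :
    (SProj B x).Nonempty := by
  apply Finset.Nonempty.image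
  rw [Finsupp.support_nonempty_iff]
  simpa using hx

lemma sigmaDeg_eq (B : Module.Basis (ℤ × ℤ) ℂ D) (x : D) (hx : (SProj B x).Nonempty) :
    sigmaDeg B x = (SProj B x).max' hx - (SProj B x).min' hx := by
  rw [sigmaDeg_def, ← Finset.coe_max' hx, ← Finset.coe_min' hx]
  rfl

/-- The `l`-th slice of `x`: the Laurent-polynomial coefficient of `σ^l`. -/
def slice (B : Module.Basis (ℤ × ℤ) ℂ D) (x : D) (l : ℤ) : LaurentPolynomial ℂ :=
  AddMonoidAlgebra.ofCoeff (Finsupp.comapDomain (fun m => (m, l)) (B.repr x)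
    (fun a _ b _ hab => by simpa using congrArg Prod.fst hab))

lemma slice_apply (B : Module.Basis (ℤ × ℤ) ℂ D) (x : D) (l m : ℤ) :
    (slice B x l).coeff m = B.repr x (m, l) := rfl

lemma slice_eq_zero (B : Module.Basis (ℤ × ℤ) ℂ D) (x : D) (l : ℤ) (hl : l ∉ SProj B x) :
    slice B x l = 0 := by
  ext m
  rw [slice_apply]
  by_contra hne
  exact hl (Finset.mem_image.mpr ⟨(m, l), Finsupp.mem_support_iff.mpr (by simpa using hne), rfl⟩)

lemma slice_ne_zero (B : Module.Basis (ℤ × ℤ) ℂ D) (x : D) (l : ℤ) (hl : l ∈ SProj B x) :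
    slice B x l ≠ 0 := by
  obtain ⟨p, hp, hpl⟩ := Finset.mem_image.mp hl
  intro h0
  have : (slice B x l).coeff p.1 ≠ 0 := by
    rw [slice_apply]
    have : (p.1, l) = p := by cases p; simp [← hpl]
    rw [this]
    exact Finsupp.mem_support_iff.mp hp
  rw [h0] at this
  simp at this

section WithB

variable (zd σd : Dˣ) (B : Module.Basis (ℤ × ℤ) ℂ D)
  (hB : ∀ p : ℤ × ℤ, B p = ((zd ^ p.1 : Dˣ) : D) * ((σd ^ p.2 : Dˣ) : D))

include hB

lemma repr_emb_mul (g : LaurentPolynomial ℂ) (l : ℤ) :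
    B.repr (embHom zd g * ((σd ^ l : Dˣ) : D)) = Finsupp.mapDomain (fun m => (m, l)) g.coeff := by
  have h1 : embHom zd g * ((σd ^ l : Dˣ) : D) = g.coeff.sum fun m a => a • B (m, l) := by
    rw [← embA_eq, embA, Finsupp.sum_mul]
    apply Finsupp.sum_congr
    intro m _
    rw [smul_mul_assoc, hB (m, l)]
  rw [h1, map_finsuppSum, Finsupp.mapDomain]
  apply Finsupp.sum_congr
  intro m _
  rw [map_smul, B.repr_self, Finsupp.smul_single, smul_eq_mul, mul_one]

lemma repr_emb_mul_apply (g : LaurentPolynomial ℂ) (l m n : ℤ) :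
    B.repr (embHom zd g * ((σd ^ l : Dˣ) : D)) (m, n) = if n = l then g.coeff m else 0 := by
  rw [repr_emb_mul zd σd B hB]
  by_cases h : n = l
  · subst h
    rw [if_pos rfl]
    exact Finsupp.mapDomain_apply (fun a b hab => by simpa using congrArg Prod.fst hab) g.coeff m
  · rw [if_neg h]
    apply Finsupp.mapDomain_notin_range
    rintro ⟨m', hm'⟩
    have h2 := congrArg Prod.snd hm'
    simp at h2
    exact h h2.symm

lemma emb_eq_zero {g : LaurentPolynomial ℂ} (h : embHom zd g = 0) : g = 0 := by
  have hinj : Function.Injective (fun m : ℤ => (m, (0 : ℤ))) := by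
    intro a b hab
    simpa using congrArg Prod.fst hab
  have h3 := repr_emb_mul zd σd B hB g 0
  rw [h, zero_mul, map_zero] at h3
  apply AddMonoidAlgebra.coeff_injective
  apply Finsupp.mapDomain_injective hinj
  rw [← h3, AddMonoidAlgebra.coeff_zero, Finsupp.mapDomain_zero]

/-- Decomposition of `x` into slices. -/
lemma decomp (x : D) :
    x = ∑ l ∈ SProj B x, embHom zd (slice B x l) * ((σd ^ l : Dˣ) : D) := by
  apply B.repr.injective
  rw [map_sum]
  ext p
  obtain ⟨m, n⟩ := p
  rw [Finsupp.finset_sum_apply]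
  have : ∀ l ∈ SProj B x,
      B.repr (embHom zd (slice B x l) * ((σd ^ l : Dˣ) : D)) (m, n)
        = if n = l then B.repr x (m, l) else 0 := by
    intro l _
    rw [repr_emb_mul_apply zd σd B hB]
    by_cases h : n = l <;> simp [h, slice_apply]
  rw [Finset.sum_congr rfl this]
  rw [Finset.sum_ite_eq (SProj B x) n (fun l => B.repr x (m, l))]
  by_cases h : n ∈ SProj B x
  · rw [if_pos h]
  · rw [if_neg h]
    by_contra hne
    exact h (Finset.mem_image.mpr ⟨(m, n), Finsupp.mem_support_iff.mpr hne, rfl⟩)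

lemma SProj_sum_subset (T : Finset ℤ) (G : ℤ → LaurentPolynomial ℂ) :
    SProj B (∑ l ∈ T, embHom zd (G l) * ((σd ^ l : Dˣ) : D)) ⊆ T := by
  intro n hn
  obtain ⟨p, hp, hpn⟩ := Finset.mem_image.mp hn
  rw [Finsupp.mem_support_iff] at hp
  rw [map_sum, Finsupp.finset_sum_apply] at hp
  obtain ⟨l, hl, hval⟩ := Finset.exists_ne_zero_of_sum_ne_zero hp
  have := repr_emb_mul_apply zd σd B hB (G l) l p.1 p.2
  rw [show (p.1, p.2) = p from rfl] at this
  rw [this] at hval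
  by_cases h : p.2 = l
  · rw [← hpn, h]; exact hl
  · rw [if_neg h] at hval; simp at hval

end WithB

/-- Twist of a Laurent polynomial: `g(z) ↦ g(q^j z)`. -/
def tw (q : ℂ) (j : ℤ) (g : LaurentPolynomial ℂ) : LaurentPolynomial ℂ :=
  g.coeff.sum fun m a => AddMonoidAlgebra.single m (a * q ^ (j * m))

lemma tw_apply (q : ℂ) (j : ℤ) (g : LaurentPolynomial ℂ) (m : ℤ) :
    (tw q j g).coeff m = g.coeff m * q ^ (j * m) := by
  classical
  rw [tw, AddMonoidAlgebra.coeff_finsuppSum, Finsupp.sum_apply]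
  simp only [AddMonoidAlgebra.coeff_single, Finsupp.single_apply]
  rw [Finsupp.sum, Finset.sum_ite_eq' g.coeff.support m (fun m' => g.coeff m' * q ^ (j * m'))]
  by_cases h : m ∈ g.coeff.support
  · rw [if_pos h]
  · rw [if_neg h, Finsupp.notMem_support_iff.mp h, zero_mul]

lemma tw_zero (q : ℂ) (j : ℤ) : tw q j 0 = 0 := by
  rw [tw]; simp

lemma tw_ne_zero (q : ℂ) (hq0 : q ≠ 0) (j : ℤ) {g : LaurentPolynomial ℂ} (hg : g ≠ 0) :
    tw q j g ≠ 0 := by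
  obtain ⟨m, hm⟩ := Finsupp.ne_iff.mp (by simpa using hg : g.coeff ≠ 0)
  simp only [Finsupp.coe_zero, Pi.zero_apply] at hm
  intro h0
  have := tw_apply q j g m
  rw [h0] at this
  simp only [AddMonoidAlgebra.coeff_zero, Finsupp.coe_zero, Pi.zero_apply] at this
  exact hm (by
    have := this.symm
    rcases mul_eq_zero.mp this with h | h
    · exact h
    · exact absurd h (zpow_ne_zero _ hq0))


lemma comm_pow (q : ℂ) (hq0 : q ≠ 0) (zd σd : Dˣ)
    (hrel : (σd : D) * (zd : D) = q • ((zd : D) * (σd : D))) (j m : ℤ) :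
    ((σd ^ j : Dˣ) : D) * ((zd ^ m : Dˣ) : D)
      = q ^ (j * m) • (((zd ^ m : Dˣ) : D) * ((σd ^ j : Dˣ) : D)) := by
  set qu : ℂˣ := Units.mk0 q hq0 with hqu
  set qD : Dˣ := Units.map (algebraMap ℂ D : ℂ →* D) qu with hqD
  have hcen : ∀ u : Dˣ, qD * u = u * qD := by
    intro u; ext; simp [hqD, Algebra.commutes]
  have hrelU : σd * zd = qD * zd * σd := by
    ext; simpa [hqD, hqu, Algebra.smul_def, mul_assoc] using hrel
  have hconjq : ∀ u : Dˣ, MulAut.conj u qD = qD := by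
    intro u
    rw [MulAut.conj_apply, ← hcen u]; group
  have hφz : MulAut.conj σd zd = qD * zd := by
    rw [MulAut.conj_apply, hrelU]; group
  have hφzinv : MulAut.conj σd⁻¹ zd = qD⁻¹ * zd := by
    have h : MulAut.conj σd (qD⁻¹ * zd) = zd := by
      rw [map_mul, hφz, map_inv, hconjq]; group
    refine (MulAut.conj σd).injective ?_
    rw [h]
    simp [← MulAut.mul_apply, ← map_mul]
    group
  have key1 : ∀ i : ℤ, MulAut.conj (σd ^ i) zd = qD ^ i * zd := by
    intro i
    induction i using Int.induction_on with
    | zero => simp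
    | succ k ih =>
        rw [zpow_add_one, map_mul, MulAut.mul_apply, hφz, map_mul, ih, hconjq]
        group
    | pred k ih =>
        rw [sub_eq_add_neg, zpow_add, zpow_neg_one, map_mul, MulAut.mul_apply,
          hφzinv, map_mul, ih, map_inv, hconjq]
        group
  have key2 : MulAut.conj (σd ^ j) (zd ^ m) = qD ^ (j * m) * zd ^ m := by
    have hcom : Commute (qD ^ j) zd := (show Commute qD zd from hcen zd).zpow_left j
    rw [map_zpow, key1, hcom.mul_zpow, ← zpow_mul]
  have key3 : σd ^ j * zd ^ m = qD ^ (j * m) * zd ^ m * σd ^ j := by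
    rw [MulAut.conj_apply] at key2
    calc σd ^ j * zd ^ m = σd ^ j * zd ^ m * (σd ^ j)⁻¹ * σd ^ j := by group
    _ = qD ^ (j * m) * zd ^ m * σd ^ j := by rw [key2]
  have hval : ((qD ^ (j * m) : Dˣ) : D) = algebraMap ℂ D (q ^ (j * m)) := by
    rw [hqD, ← map_zpow, Units.coe_map]
    rw [hqu, Units.val_zpow_eq_zpow_val, Units.val_mk0]
    rfl
  calc ((σd ^ j : Dˣ) : D) * ((zd ^ m : Dˣ) : D) = (((σd ^ j * zd ^ m : Dˣ) : Dˣ) : D) := by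
        rw [Units.val_mul]
  _ = ((qD ^ (j * m) * zd ^ m * σd ^ j : Dˣ) : D) := by rw [key3]
  _ = q ^ (j * m) • (((zd ^ m : Dˣ) : D) * ((σd ^ j : Dˣ) : D)) := by
        rw [Units.val_mul, Units.val_mul, hval, Algebra.smul_def, mul_assoc]

lemma emb_tw (q : ℂ) (hq0 : q ≠ 0) (zd σd : Dˣ)
    (hrel : (σd : D) * (zd : D) = q • ((zd : D) * (σd : D))) (j : ℤ)
    (g : LaurentPolynomial ℂ) :
    ((σd ^ j : Dˣ) : D) * embHom zd g = embHom zd (tw q j g) * ((σd ^ j : Dˣ) : D) := by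
  rw [← embA_eq, embA, Finsupp.mul_sum, tw, map_finsuppSum, Finsupp.sum_mul]
  apply Finsupp.sum_congr
  intro m _
  rw [embHom_single, smul_mul_assoc, mul_smul_comm, comm_pow q hq0 zd σd hrel j m,
    smul_smul]

lemma step (q : ℂ) (hq0 : q ≠ 0) (zd σd : Dˣ)
    (hrel : (σd : D) * (zd : D) = q • ((zd : D) * (σd : D)))
    (B : Module.Basis (ℤ × ℤ) ℂ D)
    (hB : ∀ p : ℤ × ℤ, B p = ((zd ^ p.1 : Dˣ) : D) * ((σd ^ p.2 : Dˣ) : D))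
    (w r : D) (hw : w ≠ 0) (hr : r ≠ 0) (hdeg : sigmaDeg B w ≤ sigmaDeg B r) :
    ∃ (g1 : LaurentPolynomial ℂ) (h1 : D), g1 ≠ 0 ∧
      (embHom zd g1 * r - h1 * w = 0 ∨
        sigmaDeg B (embHom zd g1 * r - h1 * w) < sigmaDeg B r) := by
  classical
  have hSw := SProj_nonempty B hw
  have hSr := SProj_nonempty B hr
  set mw := (SProj B w).min' hSw with hmw
  set Mw := (SProj B w).max' hSw with hMw
  set mr := (SProj B r).min' hSr with hmr
  set Mr := (SProj B r).max' hSr with hMr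
  have hdeg' : Mw - mw ≤ Mr - mr := by
    rw [sigmaDeg_eq B w hSw, sigmaDeg_eq B r hSr] at hdeg
    omega
  set d := mr - mw with hd
  set g1 := tw q d (slice B w mw) with hg1def
  set h1 := embHom zd (slice B r mr) * ((σd ^ d : Dˣ) : D) with hh1def
  have hg1 : g1 ≠ 0 := tw_ne_zero q hq0 d (slice_ne_zero B w mw (Finset.min'_mem _ _))
  set G : ℤ → LaurentPolynomial ℂ := fun l =>
    g1 * slice B r l - slice B r mr * tw q d (slice B w (l - d)) with hG
  set T : Finset ℤ := SProj B r ∪ (SProj B w).image (fun j => j + d) with hT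
  have h1w : h1 * w = ∑ l ∈ T, embHom zd (slice B r mr * tw q d (slice B w (l - d)))
      * ((σd ^ l : Dˣ) : D) := by
    conv_lhs => rw [hh1def, decomp zd σd B hB w]
    rw [Finset.mul_sum]
    have hterm : ∀ j ∈ SProj B w,
        embHom zd (slice B r mr) * ((σd ^ d : Dˣ) : D)
            * (embHom zd (slice B w j) * ((σd ^ j : Dˣ) : D))
          = embHom zd (slice B r mr * tw q d (slice B w ((j + d) - d)))
              * ((σd ^ (j + d) : Dˣ) : D) := by
      intro j _
      have hcomm := emb_tw q hq0 zd σd hrel d (slice B w j)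
      rw [add_sub_cancel_right, map_mul]
      rw [show ((σd ^ (j + d) : Dˣ) : D) = ((σd ^ d : Dˣ) : D) * ((σd ^ j : Dˣ) : D) by
        rw [← Units.val_mul, ← zpow_add, add_comm]]
      calc embHom zd (slice B r mr) * ((σd ^ d : Dˣ) : D)
            * (embHom zd (slice B w j) * ((σd ^ j : Dˣ) : D))
          = embHom zd (slice B r mr) * (((σd ^ d : Dˣ) : D)
            * embHom zd (slice B w j)) * ((σd ^ j : Dˣ) : D) := by
            noncomm_ring
      _ = embHom zd (slice B r mr) * (embHom zd (tw q d (slice B w j)) * ((σd ^ d : Dˣ) : D))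
            * ((σd ^ j : Dˣ) : D) := by rw [hcomm]
      _ = _ := by noncomm_ring
    rw [Finset.sum_congr rfl hterm]
    have himg : ∑ l ∈ (SProj B w).image (fun j => j + d),
        embHom zd (slice B r mr * tw q d (slice B w (l - d))) * ((σd ^ l : Dˣ) : D)
        = ∑ j ∈ SProj B w,
          embHom zd (slice B r mr * tw q d (slice B w ((j + d) - d)))
            * ((σd ^ (j + d) : Dˣ) : D) :=
      Finset.sum_image (by intros a _ b _ hab; exact add_right_cancel hab)
    rw [← himg]
    apply Finset.sum_subset (by rw [hT]; exact Finset.subset_union_right)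
    intro l _ hl
    have h0 : slice B w (l - d) = 0 := by
      apply slice_eq_zero
      intro hmem
      exact hl (Finset.mem_image.mpr ⟨l - d, hmem, by omega⟩)
    rw [h0, tw_zero, mul_zero, map_zero, zero_mul]
  have hg1r : embHom zd g1 * r
      = ∑ l ∈ T, embHom zd (g1 * slice B r l) * ((σd ^ l : Dˣ) : D) := by
    conv_lhs => rw [decomp zd σd B hB r]
    rw [Finset.mul_sum]
    have hterm : ∀ l ∈ SProj B r,
        embHom zd g1 * (embHom zd (slice B r l) * ((σd ^ l : Dˣ) : D))
          = embHom zd (g1 * slice B r l) * ((σd ^ l : Dˣ) : D) := by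
      intro l _; rw [map_mul, mul_assoc]
    rw [Finset.sum_congr rfl hterm]
    apply Finset.sum_subset (by rw [hT]; exact Finset.subset_union_left)
    intro l _ hl
    rw [slice_eq_zero B r l hl, mul_zero, map_zero, zero_mul]
  have hs : embHom zd g1 * r - h1 * w = ∑ l ∈ T, embHom zd (G l) * ((σd ^ l : Dˣ) : D) := by
    rw [hg1r, h1w, ← Finset.sum_sub_distrib]
    apply Finset.sum_congr rfl
    intro l _
    simp only [hG]
    rw [map_sub, sub_mul]
  have hGzero : ∀ l, l ∉ Finset.Ioc mr Mr → G l = 0 := by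
    intro l hl
    simp only [Finset.mem_Ioc, not_and_or, not_lt, not_le] at hl
    simp only [hG]
    rcases hl with hl | hl
    · rcases lt_or_eq_of_le hl with hlt | heq
      · have ha : slice B r l = 0 := by
          apply slice_eq_zero
          intro hmem
          exact absurd (Finset.min'_le _ _ hmem : mr ≤ l) (by omega)
        have hb : slice B w (l - d) = 0 := by
          apply slice_eq_zero
          intro hmem
          exact absurd (Finset.min'_le _ _ hmem : mw ≤ l - d) (by omega)
        rw [ha, hb, tw_zero, mul_zero, mul_zero, sub_zero]
      · rw [heq, hg1def, show mr - d = mw by omega, mul_comm, sub_self]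
    · have ha : slice B r l = 0 := by
        apply slice_eq_zero
        intro hmem
        exact absurd (Finset.le_max' _ _ hmem : l ≤ Mr) (by omega)
      have hb : slice B w (l - d) = 0 := by
        apply slice_eq_zero
        intro hmem
        exact absurd (Finset.le_max' _ _ hmem : l - d ≤ Mw) (by omega)
      rw [ha, hb, tw_zero, mul_zero, mul_zero, sub_zero]
  have hsub : SProj B (embHom zd g1 * r - h1 * w) ⊆ Finset.Ioc mr Mr := by
    have hs2 : embHom zd g1 * r - h1 * w
        = ∑ l ∈ T ∩ Finset.Ioc mr Mr, embHom zd (G l) * ((σd ^ l : Dˣ) : D) := by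
      rw [hs]
      symm
      apply Finset.sum_subset Finset.inter_subset_left
      intro l hlT hlni
      have h0 : G l = 0 := hGzero l (fun hIoc => hlni (Finset.mem_inter.mpr ⟨hlT, hIoc⟩))
      rw [h0, map_zero, zero_mul]
    rw [hs2]
    exact (SProj_sum_subset zd σd B hB _ _).trans Finset.inter_subset_right
  refine ⟨g1, h1, hg1, ?_⟩
  by_cases hz : embHom zd g1 * r - h1 * w = 0
  · exact Or.inl hz
  · right
    have hne := SProj_nonempty B hz
    have h1' := hsub (Finset.min'_mem _ hne)
    have h2' := hsub (Finset.max'_mem _ hne)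
    rw [Finset.mem_Ioc] at h1' h2'
    rw [sigmaDeg_eq B _ hne, sigmaDeg_eq B r hSr]
    omega

end Stmt5Aux

theorem stmt_5 (q : ℂ) (hq : ∀ n : ℤ, n ≠ 0 → q ^ n ≠ 1)
    (D : Type*) [Ring D] [Algebra ℂ D] (zd σd : Dˣ)
    (hrel : (σd : D) * (zd : D) = q • ((zd : D) * (σd : D)))
    (B : Module.Basis (ℤ × ℤ) ℂ D)
    (hB : ∀ p : ℤ × ℤ, B p = ((zd ^ p.1 : Dˣ) : D) * ((σd ^ p.2 : Dˣ) : D))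
    (w r : D) (hw : w ≠ 0) (hr : r ≠ 0) (hdeg : sigmaDeg B w ≤ sigmaDeg B r) :
    ∃ (g : LaurentPolynomial ℂ) (h : D), g ≠ 0 ∧
      (embA zd g * r - h * w = 0 ∨ sigmaDeg B (embA zd g * r - h * w) < sigmaDeg B w) := by
  classical
  have hD : Nontrivial D := ⟨⟨B (0, 0), 0, B.ne_zero _⟩⟩
  have hq0 : q ≠ 0 := by
    intro h0
    have hzero : ((σd * zd : Dˣ) : D) = 0 := by rw [Units.val_mul, hrel, h0, zero_smul]
    exact Units.ne_zero _ hzero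
  clear hq
  suffices H : ∀ n : ℕ, ∀ r : D, r ≠ 0 → sigmaDeg B w ≤ sigmaDeg B r →
      sigmaDeg B r ≤ (n : ℤ) →
      ∃ (g : LaurentPolynomial ℂ) (h : D), g ≠ 0 ∧
        (embA zd g * r - h * w = 0 ∨ sigmaDeg B (embA zd g * r - h * w) < sigmaDeg B w) by
    exact H (sigmaDeg B r).toNat r hr hdeg (Int.self_le_toNat _)
  intro n
  induction n using Nat.strong_induction_on with
  | _ n IH =>
    intro r hr hdeg hbound
    obtain ⟨g1, h1, hg1, hcase⟩ := Stmt5Aux.step q hq0 zd σd hrel B hB w r hw hr hdeg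
    rw [← Stmt5Aux.embA_eq] at hcase
    rcases hcase with h0 | hlt
    · exact ⟨g1, h1, hg1, Or.inl h0⟩
    · set s := embA zd g1 * r - h1 * w with hsdef
      by_cases hz : s = 0
      · exact ⟨g1, h1, hg1, Or.inl hz⟩
      by_cases hws : sigmaDeg B s < sigmaDeg B w
      · exact ⟨g1, h1, hg1, Or.inr hws⟩
      push_neg at hws
      have hsn : 0 ≤ sigmaDeg B s := by
        have hne := Stmt5Aux.SProj_nonempty B hz
        rw [Stmt5Aux.sigmaDeg_eq B s hne]
        have hmm : (Stmt5Aux.SProj B s).min' hne ≤ (Stmt5Aux.SProj B s).max' hne :=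
          Finset.le_max' _ _ (Finset.min'_mem _ hne)
        omega
      have hlt' : (sigmaDeg B s).toNat < n := by omega
      obtain ⟨g', h', hg', hc'⟩ :=
        IH (sigmaDeg B s).toNat hlt' s hz hws (Int.self_le_toNat _)
      refine ⟨g' * g1, Stmt5Aux.embHom zd g' * h1 + h', mul_ne_zero hg' hg1, ?_⟩
      have key : embA zd (g' * g1) * r - (Stmt5Aux.embHom zd g' * h1 + h') * w
          = embA zd g' * s - h' * w := by
        rw [hsdef]
        simp only [Stmt5Aux.embA_eq, map_mul]
        noncomm_ring
      rw [key]
      exact hc'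

end
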